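/- Let G be a finite undirected graph, X ⊆ V(G), v ∈ V(G)∖X, and k a nonnegative integer. Suppose there exist k+2 paths in G, each starting at v and ending at a vertex of X, with pairwise distinct endpoints in X, and pairwise vertex-disjoint except for the common vertex v. Then every multiway cut Z ⊆ V(G)∖X for X with |Z| ≤ k contains v. -/

import Mathlib

/-!
STATEMENT 7: let `G` be a finite undirected graph, `X ⊆ V(G)`, `v ∈ V(G) ∖ X` and
`k ≥ 0`.  If there are `k+2` paths in `G` from `v` to pairwise distinct vertices of
`X` that are pairwise vertex-disjoint except for `v`, then every multiway cut
`Z ⊆ V(G) ∖ X` for `X` with `|Z| ≤ k` contains `v`.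
-/

variable {V : Type*}

/-- Reachability in the undirected graph `G` with the vertex set `S` removed. -/
def rAvoid (G : SimpleGraph V) (S : Set V) : V → V → Prop :=
  Relation.ReflTransGen fun a b => G.Adj a b ∧ a ∉ S ∧ b ∉ S

lemma walk_rAvoid (G : SimpleGraph V) (Z : Set V) {a b : V} (p : G.Walk a b)
    (h : ∀ w ∈ p.support, w ∉ Z) : rAvoid G Z a b := by
  induction p with
  | nil => exact Relation.ReflTransGen.refl
  | cons hadj q ih =>
    exact Relation.ReflTransGen.head ⟨hadj, h _ (by simp), h _ (by simp)⟩
      (ih fun w hw => h _ (by simp [hw]))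

lemma rAvoid_symm (G : SimpleGraph V) (Z : Set V) {a b : V} (h : rAvoid G Z a b) :
    rAvoid G Z b a :=
  haveI : Std.Symm (fun a b : V => G.Adj a b ∧ a ∉ Z ∧ b ∉ Z) :=
    ⟨fun _ _ ⟨h1, h2, h3⟩ => ⟨h1.symm, h3, h2⟩⟩
  Std.Symm.symm (r := Relation.ReflTransGen fun a b => G.Adj a b ∧ a ∉ Z ∧ b ∉ Z) _ _ h

theorem stmt_7 [Fintype V] (G : SimpleGraph V) (X : Set V) (v : V) (hv : v ∉ X)
    (k : ℕ)
    -- the endpoints of the `k+2` paths: pairwise distinct vertices of `X`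
    (y : Fin (k + 2) → V) (hyX : ∀ i, y i ∈ X) (hyinj : Function.Injective y)
    -- the `k+2` paths from `v` to the `y i`
    (P : ∀ i : Fin (k + 2), G.Walk v (y i)) (hP : ∀ i, (P i).IsPath)
    -- pairwise vertex-disjoint except for the common vertex `v`
    (hdisj : ∀ i j : Fin (k + 2), i ≠ j →
      ∀ w : V, w ∈ (P i).support → w ∈ (P j).support → w = v)
    -- `Z ⊆ V(G) ∖ X` is a multiway cut for `X` of cardinality at most `k`
    (Z : Set V) (hZX : Disjoint Z X)
    (hmwc : ∀ x ∈ X, ∀ x' ∈ X, rAvoid G Z x x' → x = x')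
    (hcard : Z.ncard ≤ k) :
    v ∈ Z := by
  classical
  by_contra hvZ
  have hZfin : Z.Finite := Set.toFinite Z
  set S : Finset (Fin (k + 2)) :=
    Finset.univ.filter (fun i => ∃ w ∈ (P i).support, w ∈ Z) with hS
  have hmem : ∀ i ∈ S, ∃ w, w ∈ (P i).support ∧ w ∈ Z := by
    intro i hi
    simpa using (Finset.mem_filter.mp hi).2
  choose g hg1 hg2 using hmem
  have hScard : S.card ≤ k := by
    have : S.card ≤ hZfin.toFinset.card := by
      apply Finset.card_le_card_of_injOn
        (fun i => if h : i ∈ S then g i h else v)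
      · intro i hi
        simp only [Finset.mem_coe] at hi ⊢
        rw [dif_pos hi, hZfin.mem_toFinset]
        exact hg2 i hi
      · intro i hi j hj hij
        simp only [Finset.mem_coe] at hi hj
        simp only [hi, hj, dif_pos] at hij
        by_contra hne
        have := hdisj i j hne (g i hi) (hg1 i hi) (hij ▸ hg1 j hj)
        exact hvZ (this ▸ hg2 i hi)
    rw [← Set.ncard_eq_toFinset_card Z hZfin] at this
    exact this.trans hcard
  have hScard' : 2 ≤ Sᶜ.card := by
    have h := Finset.card_compl S
    simp only [Fintype.card_fin] at h
    omega
  obtain ⟨i, hi, j, hj, hij⟩ := Finset.one_lt_card.mp (by omega : 1 < Sᶜ.card)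
  have hfree : ∀ m ∈ Sᶜ, ∀ w ∈ (P m).support, w ∉ Z := by
    intro m hm w hw hwZ
    exact (Finset.mem_compl.mp hm) (Finset.mem_filter.mpr ⟨Finset.mem_univ _, ⟨w, hw, hwZ⟩⟩)
  have h1 := walk_rAvoid G Z (P i) (hfree i hi)
  have h2 := walk_rAvoid G Z (P j) (hfree j hj)
  exact hij (hyinj (hmwc _ (hyX i) _ (hyX j) ((rAvoid_symm G Z h1).trans h2)))
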